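/- (Example 1, stable manifold formula.) Let 0 < p < 1 and let A be the 3×3 matrix with rows (−1,0,0), (0,2,1), (0,0,2), i.e. block diagonal with the 1×1 stable block (−1) and the unstable Jordan block J_2(2); let f(x₁,x₂,x₃) := (0, x₁², 3x₁²); let π_s(x₁,x₂,x₃) = (x₁,0,0) and π_u(x₁,x₂,x₃) = (0,x₂,x₃). Let σ = (σ₁,0,0) and let x : [0,∞) → ℂ³ be a bounded continuous fixed point of T_σ (with the integrand τ ↦ (p/τ) B̃(−τ) π_u f(x(τ)) Bochner integrable on (0,∞)). Then x₁(t) = E_p(−t^p) σ₁ for all t ≥ 0, and the third coordinate at time 0 satisfies x₃(0) = −3 · 2^{1/p − 1} · σ₁² · ∫_0^∞ e^{−2^{1/p} τ} E_p(−τ^p)² dτ. -/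

import Mathlib

open MeasureTheory

noncomputable def mlE (p β : ℝ) (z : ℂ) : ℂ :=
  ∑' k : ℕ, z ^ k / Complex.Gamma ((p * k + β : ℝ) : ℂ)

noncomputable def psiT (p : ℝ) (m : ℕ) (t : ℝ) (lam : ℂ) : ℂ :=
  (1 / (m.factorial : ℂ)) *
    iteratedDeriv (m + 1) (fun z : ℂ => Complex.exp ((t : ℂ) * z ^ (1 / (p : ℂ)))) lam

noncomputable def mlEM {ι : Type*} [Fintype ι] [DecidableEq ι] (p β : ℝ) (M : Matrix ι ι ℂ) :
    Matrix ι ι ℂ :=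
  ∑' k : ℕ, (Complex.Gamma ((p * k + β : ℝ) : ℂ))⁻¹ • M ^ k

noncomputable def mvE {ι : Type*} [Fintype ι] [DecidableEq ι] (M : Matrix ι ι ℂ)
    (v : EuclideanSpace ℂ ι) : EuclideanSpace ℂ ι :=
  Matrix.toEuclideanLin M v

def BC {E : Type*} [NormedAddCommGroup E] (x : ℝ → E) : Prop :=
  ContinuousOn x (Set.Ici 0) ∧ ∃ C, ∀ t : ℝ, 0 ≤ t → ‖x t‖ ≤ C

/-- the matrix of Example 1: one stable block `(-1)`, one unstable Jordan block `J₂(2)`. -/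
noncomputable def A18 : Matrix (Fin 3) (Fin 3) ℂ := !![-1, 0, 0; 0, 2, 1; 0, 0, 2]

/-- the block matrix `B̃(t)` of Example 1. -/
noncomputable def Bt18 (p : ℝ) (t : ℝ) : Matrix (Fin 3) (Fin 3) ℂ :=
  !![0, 0, 0; 0, psiT p 0 t 2, psiT p 1 t 2; 0, 0, psiT p 0 t 2]

/-- the nonlinearity `f(x₁,x₂,x₃) = (0, x₁², 3x₁²)` of Example 1. -/
noncomputable def f18 (v : EuclideanSpace ℂ (Fin 3)) : EuclideanSpace ℂ (Fin 3) :=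
  (WithLp.equiv 2 (Fin 3 → ℂ)).symm ![0, v 0 ^ 2, 3 * v 0 ^ 2]

/-- the unstable projection `π_u(x₁,x₂,x₃) = (0,x₂,x₃)`. -/
noncomputable def piu18 (v : EuclideanSpace ℂ (Fin 3)) : EuclideanSpace ℂ (Fin 3) :=
  (WithLp.equiv 2 (Fin 3 → ℂ)).symm ![0, v 1, v 2]

/-- the operator `T_σ` of Example 1. -/
noncomputable def T18 (p : ℝ) (σ : EuclideanSpace ℂ (Fin 3)) (x : ℝ → EuclideanSpace ℂ (Fin 3))
    (t : ℝ) : EuclideanSpace ℂ (Fin 3) :=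
  mvE (mlEM p 1 (((t ^ p : ℝ) : ℂ) • A18)) σ
    + mvE (mlEM p 1 (((t ^ p : ℝ) : ℂ) • A18))
        (∫ τ in Set.Ioi (0 : ℝ), (p / τ) • mvE (Bt18 p (-τ)) (piu18 (f18 (x τ))))
    + ∫ τ in Set.Ioc (0 : ℝ) t,
        ((t - τ) ^ (p - 1)) • mvE (mlEM p p ((((t - τ) ^ p : ℝ) : ℂ) • A18)) (f18 (x τ))

section Aux

lemma gamma_ratio {p X : ℝ} (hp : 0 < p) (hX : 2 ≤ X) :
    Real.Gamma X * (X - 1) ^ p ≤ Real.Gamma (X + p) := by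
  have h1 : (0:ℝ) < X - 1 := by linarith
  have hX0 : (0:ℝ) < X := by linarith
  have hXp : (0:ℝ) < X + p := by linarith
  have hs := Real.convexOn_log_Gamma.slope_mono_adjacent
    (Set.mem_Ioi.2 h1) (Set.mem_Ioi.2 hXp) (by linarith : X - 1 < X) (by linarith : X < X + p)
  have hG1 : 0 < Real.Gamma (X - 1) := Real.Gamma_pos_of_pos h1
  have hGX : 0 < Real.Gamma X := Real.Gamma_pos_of_pos hX0
  have hGXp : 0 < Real.Gamma (X + p) := Real.Gamma_pos_of_pos hXp
  have hadd : Real.Gamma X = (X - 1) * Real.Gamma (X - 1) := by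
    have := Real.Gamma_add_one (ne_of_gt h1)
    rwa [sub_add_cancel] at this
  simp only [Function.comp] at hs
  rw [show X - (X - 1) = 1 by ring, div_one, show X + p - X = p by ring] at hs
  have hlog : Real.log (Real.Gamma X) - Real.log (Real.Gamma (X - 1)) = Real.log (X - 1) := by
    rw [hadd, Real.log_mul (ne_of_gt h1) (ne_of_gt hG1)]; ring
  rw [hlog, le_div_iff₀ hp] at hs
  have : Real.log (Real.Gamma X * (X - 1) ^ p) ≤ Real.log (Real.Gamma (X + p)) := by
    rw [Real.log_mul (ne_of_gt hGX) (ne_of_gt (Real.rpow_pos_of_pos h1 p)),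
      Real.log_rpow h1]
    linarith
  exact (Real.log_le_log_iff (by positivity) hGXp).1 this

lemma keyS {p β : ℝ} (hp : 0 < p) (hβ : 0 < β) (r : ℝ) :
    Summable (fun k : ℕ => (k + 1 : ℝ) * r ^ k / Real.Gamma (p * k + β)) := by
  apply summable_of_ratio_norm_eventually_le (r := 1/2) (by norm_num)
  have h1 : Filter.Tendsto (fun k : ℕ => p * k + β) Filter.atTop Filter.atTop := by
    apply Filter.tendsto_atTop_add_const_right
    exact (tendsto_natCast_atTop_atTop (R := ℝ)).const_mul_atTop hp
  have h2 : Filter.Tendsto (fun k : ℕ => (p * k + β - 1) ^ p) Filter.atTop Filter.atTop := by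
    have := (tendsto_rpow_atTop hp).comp (Filter.tendsto_atTop_add_const_right _ (-1:ℝ) h1)
    simpa [Function.comp_def, sub_eq_add_neg] using this
  filter_upwards [h1.eventually_ge_atTop 2, h2.eventually_ge_atTop (4 * |r| + 1)] with k hk2 hk4
  set X := p * k + β with hXdef
  have hXpos : (0:ℝ) < X := by linarith
  have hGX : 0 < Real.Gamma X := Real.Gamma_pos_of_pos hXpos
  have hGXp : 0 < Real.Gamma (X + p) := Real.Gamma_pos_of_pos (by linarith)
  have hgr := gamma_ratio hp hk2
  have hgr2 : Real.Gamma X * (4 * |r| + 1) ≤ Real.Gamma (X + p) := by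
    calc Real.Gamma X * (4 * |r| + 1) ≤ Real.Gamma X * (X - 1) ^ p := by
          apply mul_le_mul_of_nonneg_left hk4 hGX.le
      _ ≤ _ := hgr
  have heq : p * (k + 1 : ℕ) + β = X + p := by push_cast; ring
  rw [heq]
  have hnorm1 : ‖((k + 1 : ℕ) + 1 : ℝ) * r ^ (k+1) / Real.Gamma (X + p)‖
      = ((k:ℝ) + 2) * |r| ^ (k+1) / Real.Gamma (X + p) := by
    rw [Real.norm_eq_abs, abs_div, abs_mul, abs_pow, abs_of_pos hGXp,
      abs_of_pos (by positivity : (0:ℝ) < (k + 1 : ℕ) + 1)]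
    push_cast; ring_nf
  have hnorm2 : ‖((k : ℕ) + 1 : ℝ) * r ^ k / Real.Gamma X‖
      = ((k:ℝ) + 1) * |r| ^ k / Real.Gamma X := by
    rw [Real.norm_eq_abs, abs_div, abs_mul, abs_pow, abs_of_pos hGX,
      abs_of_pos (by positivity : (0:ℝ) < (k:ℝ) + 1)]
  push_cast at hnorm1 hnorm2 ⊢
  rw [hnorm1, hnorm2]
  have h5 : ((k:ℝ) + 2) * |r| ^ (k+1) / Real.Gamma (X + p)
      ≤ ((k:ℝ) + 2) * |r| ^ (k+1) / (Real.Gamma X * (4 * |r| + 1)) := by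
    apply div_le_div_of_nonneg_left (by positivity) (by positivity) hgr2
  refine h5.trans ?_
  have key : ((k:ℝ) + 2) * |r| ≤ ((k:ℝ) + 1) * (4 * |r| + 1) / 2 := by
    nlinarith [abs_nonneg r, Nat.cast_nonneg (α := ℝ) k,
      mul_nonneg (Nat.cast_nonneg (α := ℝ) k) (abs_nonneg r)]
  rw [show (1:ℝ)/2 * (((k:ℝ)+1)*|r|^k/Real.Gamma X) = (((k:ℝ)+1)*|r|^k/2)/Real.Gamma X by ring,
    div_le_div_iff₀ (by positivity) hGX]
  calc ((k:ℝ)+2)*|r|^(k+1)*Real.Gamma X = (((k:ℝ)+2)*|r|) * (|r|^k * Real.Gamma X) := by ring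
    _ ≤ (((k:ℝ)+1)*(4*|r|+1)/2) * (|r|^k * Real.Gamma X) :=
        mul_le_mul_of_nonneg_right key (by positivity)
    _ = ((k:ℝ)+1)*|r|^k/2 * (Real.Gamma X*(4*|r|+1)) := by ring

lemma A18_pow (k : ℕ) :
    A18 ^ k = !![(-1:ℂ)^k, 0, 0; 0, 2^k, (k:ℂ) * 2^(k-1); 0, 0, 2^k] := by
  induction k with
  | zero => simp [Matrix.one_fin_three]
  | succ n ih =>
    rw [pow_succ, ih, A18]
    ext i j
    fin_cases i <;> fin_cases j <;>
      simp [Matrix.mul_apply, Fin.sum_univ_three, pow_succ, Matrix.vecHead, Matrix.vecTail] <;>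
      cases n with
      | zero => norm_num
      | succ m => push_cast [Nat.add_sub_cancel]; ring

lemma gamma_inv_norm (p β : ℝ) {k : ℕ} (hpk : 0 < p * (k:ℕ) + β) :
    ‖(Complex.Gamma ((p * k + β : ℝ) : ℂ))⁻¹‖ = (Real.Gamma (p * k + β))⁻¹ := by
  rw [Complex.Gamma_ofReal, norm_inv, Complex.norm_real, Real.norm_eq_abs,
    abs_of_pos (Real.Gamma_pos_of_pos hpk)]

lemma summable_S {p β : ℝ} (hp : 0 < p) (hβ : 0 < β) (c : ℂ) :
    Summable (fun k : ℕ => (Complex.Gamma ((p * k + β : ℝ) : ℂ))⁻¹ • (c • A18) ^ k) := by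
  refine Pi.summable.2 fun i => Pi.summable.2 fun j => ?_
  apply Summable.of_norm_bounded
    (g := fun k : ℕ => (k + 1 : ℝ) * (2 * ‖c‖) ^ k / Real.Gamma (p * k + β)) (keyS hp hβ _)
  intro k
  have hpk : 0 < p * (k:ℕ) + β := by positivity
  have hA : ‖(A18 ^ k) i j‖ ≤ (k + 1 : ℝ) * 2 ^ k := by
    have h2 : (2:ℝ) ^ (k-1) ≤ 2 ^ k := pow_le_pow_right₀ one_le_two (Nat.sub_le k 1)
    have hk0 : (0:ℝ) ≤ k := Nat.cast_nonneg k
    have h1 : (1:ℝ) ≤ 2 ^ k := one_le_pow₀ one_le_two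
    rw [A18_pow]
    fin_cases i <;> fin_cases j <;>
      simp [Matrix.vecHead, Matrix.vecTail, norm_pow]
    all_goals nlinarith [mul_le_mul_of_nonneg_left h2 hk0]
  calc ‖((Complex.Gamma ((p * k + β : ℝ) : ℂ))⁻¹ • (c • A18) ^ k) i j‖
      = (Real.Gamma (p * k + β))⁻¹ * (‖c‖ ^ k * ‖(A18 ^ k) i j‖) := by
        rw [smul_pow, Matrix.smul_apply, Matrix.smul_apply, smul_eq_mul, smul_eq_mul,
          norm_mul, norm_mul, norm_pow, gamma_inv_norm p β hpk]
    _ ≤ (Real.Gamma (p * k + β))⁻¹ * (‖c‖ ^ k * ((k + 1 : ℝ) * 2 ^ k)) := by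
        have := (Real.Gamma_pos_of_pos hpk)
        gcongr
    _ = (k + 1 : ℝ) * (2 * ‖c‖) ^ k / Real.Gamma (p * k + β) := by
        rw [mul_pow, div_eq_mul_inv]; ring

lemma mlEM_c_apply {p β : ℝ} (hp : 0 < p) (hβ : 0 < β) (c : ℂ) (i j : Fin 3) :
    mlEM p β (c • A18) i j
      = ∑' k : ℕ, (Complex.Gamma ((p * k + β : ℝ) : ℂ))⁻¹ * (c ^ k * (A18 ^ k) i j) := by
  rw [mlEM]; erw [tsum_apply (summable_S hp hβ c), tsum_apply (Pi.summable.1 (summable_S hp hβ c) i)]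
  congr 1; funext k
  rw [smul_pow, Matrix.smul_apply, Matrix.smul_apply, smul_eq_mul, smul_eq_mul]

lemma mlEM_00 {p β : ℝ} (hp : 0 < p) (hβ : 0 < β) (c : ℂ) :
    mlEM p β (c • A18) 0 0 = mlE p β (-c) := by
  rw [mlEM_c_apply hp hβ, mlE]
  congr 1; funext k
  rw [A18_pow, show (!![(-1:ℂ)^k, 0, 0; 0, 2^k, (k:ℂ) * 2^(k-1); 0, 0, 2^k]) 0 0 = (-1:ℂ)^k
    from rfl, neg_pow, div_eq_mul_inv]
  ring

lemma mlEM_01 {p β : ℝ} (hp : 0 < p) (hβ : 0 < β) (c : ℂ) :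
    mlEM p β (c • A18) 0 1 = 0 := by
  rw [mlEM_c_apply hp hβ]
  convert tsum_zero with k
  rw [A18_pow]; simp

lemma mlEM_02 {p β : ℝ} (hp : 0 < p) (hβ : 0 < β) (c : ℂ) :
    mlEM p β (c • A18) 0 2 = 0 := by
  rw [mlEM_c_apply hp hβ]
  convert tsum_zero with k
  rw [A18_pow]; simp [Matrix.vecHead, Matrix.vecTail]

lemma mlEM_zero_one {p : ℝ} : mlEM p 1 (0 : Matrix (Fin 3) (Fin 3) ℂ) = 1 := by
  rw [mlEM, tsum_eq_single 0]
  · norm_num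
  · intro k hk
    rw [zero_pow hk, smul_zero]

lemma psiT_zero (p : ℝ) (t : ℝ) :
    psiT p 0 t 2 = (t : ℂ) * (1 / (p : ℂ)) * (2:ℂ) ^ ((1 / (p:ℂ)) - 1)
      * Complex.exp ((t : ℂ) * (2:ℂ) ^ (1 / (p:ℂ))) := by
  have h1 : HasDerivAt (fun z : ℂ => z ^ (1 / (p:ℂ)))
      ((1 / (p:ℂ)) * (2:ℂ) ^ ((1 / (p:ℂ)) - 1)) 2 :=
    (Complex.hasStrictDerivAt_cpow_const (by
      rw [Complex.mem_slitPlane_iff]; left; norm_num)).hasDerivAt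
  have h2 : HasDerivAt (fun z : ℂ => (t:ℂ) * z ^ (1 / (p:ℂ)))
      ((t:ℂ) * ((1 / (p:ℂ)) * (2:ℂ) ^ ((1 / (p:ℂ)) - 1))) 2 := h1.const_mul _
  have h3 := h2.cexp
  rw [psiT, iteratedDeriv_one, h3.deriv]
  norm_num
  ring

lemma mvE_apply (M : Matrix (Fin 3) (Fin 3) ℂ) (v : EuclideanSpace ℂ (Fin 3)) (i : Fin 3) :
    mvE M v i = M i 0 * v 0 + M i 1 * v 1 + M i 2 * v 2 := by
  show (M.mulVec (fun j => v j)) i = _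
  simp [Matrix.mulVec, dotProduct, Fin.sum_univ_three]

lemma integral_eval {φ : ℝ → EuclideanSpace ℂ (Fin 3)} {s : Set ℝ}
    (hφ : IntegrableOn φ s) (i : Fin 3) :
    (∫ τ in s, φ τ) i = ∫ τ in s, φ τ i :=
  ((EuclideanSpace.proj i (𝕜 := ℂ)).integral_comp_comm hφ).symm

end Aux

theorem stmt_18 (p : ℝ) (hp0 : 0 < p) (hp1 : p < 1) (σ₁ : ℂ)
    (x : ℝ → EuclideanSpace ℂ (Fin 3)) (hx : BC x)
    (hint : MeasureTheory.IntegrableOn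
      (fun τ : ℝ => (p / τ) • mvE (Bt18 p (-τ)) (piu18 (f18 (x τ)))) (Set.Ioi 0))
    (hfix : ∀ t ≥ (0 : ℝ),
      T18 p ((WithLp.equiv 2 (Fin 3 → ℂ)).symm ![σ₁, 0, 0]) x t = x t) :
    (∀ t ≥ (0 : ℝ), x t 0 = mlE p 1 (-((t ^ p : ℝ) : ℂ)) * σ₁) ∧
      x 0 2 = -3 * (((2 : ℝ) ^ (1 / p - 1) : ℝ) : ℂ) * σ₁ ^ 2 *
        ∫ τ in Set.Ioi (0 : ℝ),
          ((Real.exp (-((2 : ℝ) ^ (1 / p)) * τ) : ℝ) : ℂ)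
            * mlE p 1 (-((τ ^ p : ℝ) : ℂ)) ^ 2 := by
  have hp' : (p:ℂ) ≠ 0 := Complex.ofReal_ne_zero.2 hp0.ne'
  have hsplit : ∀ (a b c : EuclideanSpace ℂ (Fin 3)) (i : Fin 3),
      (a + b + c) i = a i + b i + c i := fun _ _ _ _ => rfl
  have key1 : ∀ t ≥ (0:ℝ), x t 0 = mlE p 1 (-((t ^ p : ℝ) : ℂ)) * σ₁ := by
    intro t ht
    rw [← hfix t ht, T18, hsplit]
    have e1 : mvE (mlEM p 1 (((t ^ p : ℝ) : ℂ) • A18))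
        ((WithLp.equiv 2 (Fin 3 → ℂ)).symm ![σ₁, 0, 0]) 0
        = mlE p 1 (-((t ^ p : ℝ) : ℂ)) * σ₁ := by
      rw [mvE_apply, mlEM_00 hp0 one_pos, mlEM_01 hp0 one_pos, mlEM_02 hp0 one_pos]
      show _ * σ₁ + 0 * (0:ℂ) + 0 * (0:ℂ) = _
      ring
    have e2 : mvE (mlEM p 1 (((t ^ p : ℝ) : ℂ) • A18))
        (∫ τ in Set.Ioi (0:ℝ), (p / τ) • mvE (Bt18 p (-τ)) (piu18 (f18 (x τ)))) 0 = 0 := by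
      rw [mvE_apply, mlEM_01 hp0 one_pos, mlEM_02 hp0 one_pos]
      have hv0 : (∫ τ in Set.Ioi (0:ℝ),
          (p / τ) • mvE (Bt18 p (-τ)) (piu18 (f18 (x τ)))) 0 = 0 := by
        rw [integral_eval hint 0]
        have h00 : ∀ τ : ℝ, ((p / τ) • mvE (Bt18 p (-τ)) (piu18 (f18 (x τ)))) 0 = 0 := by
          intro τ
          rw [PiLp.smul_apply, mvE_apply]
          show (p/τ) • ((0:ℂ) * _ + (0:ℂ) * _ + (0:ℂ) * _) = 0
          simp
        simp only [h00, integral_zero]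
      rw [hv0]
      ring
    have e3 : (∫ τ in Set.Ioc (0:ℝ) t, ((t - τ) ^ (p - 1)) •
        mvE (mlEM p p ((((t - τ) ^ p : ℝ) : ℂ) • A18)) (f18 (x τ))) 0 = 0 := by
      set φ : ℝ → EuclideanSpace ℂ (Fin 3) := fun τ => ((t - τ) ^ (p - 1)) •
        mvE (mlEM p p ((((t - τ) ^ p : ℝ) : ℂ) • A18)) (f18 (x τ)) with hφdef
      have hφ0 : ∀ τ : ℝ, φ τ 0 = 0 := by
        intro τ
        rw [hφdef]
        simp only
        rw [PiLp.smul_apply, mvE_apply, mlEM_01 hp0 hp0, mlEM_02 hp0 hp0]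
        show ((t - τ) ^ (p-1)) • (_ * (0:ℂ) + 0 * _ + 0 * _) = 0
        simp
      by_cases hI : IntegrableOn φ (Set.Ioc 0 t)
      · rw [integral_eval hI 0]
        simp only [hφ0, integral_zero]
      · rw [integral_undef hI]
        rfl
    rw [e1, e2, e3]
    ring
  refine ⟨key1, ?_⟩
  have h0 := hfix 0 le_rfl
  have hc : (((0:ℝ) ^ p : ℝ) : ℂ) = 0 := by
    rw [Real.zero_rpow hp0.ne', Complex.ofReal_zero]
  rw [← h0, T18, hsplit]
  rw [hc, zero_smul, mlEM_zero_one]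
  have t1 : mvE (1 : Matrix (Fin 3) (Fin 3) ℂ)
      ((WithLp.equiv 2 (Fin 3 → ℂ)).symm ![σ₁, 0, 0]) 2 = 0 := by
    rw [mvE_apply]
    show (1:Matrix (Fin 3) (Fin 3) ℂ) 2 0 * σ₁ + _ * (0:ℂ) + _ * (0:ℂ) = 0
    simp [Matrix.one_apply]
  have t3 : (∫ τ in Set.Ioc (0:ℝ) 0, ((0 - τ) ^ (p - 1)) •
      mvE (mlEM p p ((((0 - τ) ^ p : ℝ) : ℂ) • A18)) (f18 (x τ))) 2 = 0 := by
    rw [Set.Ioc_self, Measure.restrict_empty, integral_zero_measure]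
    rfl
  rw [t1, t3]
  have t2 : mvE (1 : Matrix (Fin 3) (Fin 3) ℂ)
      (∫ τ in Set.Ioi (0:ℝ), (p / τ) • mvE (Bt18 p (-τ)) (piu18 (f18 (x τ)))) 2
      = ∫ τ in Set.Ioi (0:ℝ), ((p / τ) • mvE (Bt18 p (-τ)) (piu18 (f18 (x τ)))) 2 := by
    rw [mvE_apply, ← integral_eval hint 2]
    simp [Matrix.one_apply]
  rw [t2]
  rw [← integral_const_mul]
  rw [MeasureTheory.setIntegral_congr_fun measurableSet_Ioi ?_]
  · ring
  intro τ hτ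
  have hτ0 : (0:ℝ) < τ := hτ
  simp only
  have hw : (piu18 (f18 (x τ))) 2 = 3 * (x τ 0) ^ 2 := rfl
  rw [PiLp.smul_apply, mvE_apply]
  show (p/τ) • ((0:ℂ) * _ + (0:ℂ) * _ + psiT p 0 (-τ) 2 * (piu18 (f18 (x τ))) 2) = _
  rw [hw, key1 τ hτ0.le, psiT_zero, Complex.real_smul]
  have hcpow1 : ((2:ℂ)) ^ ((1 / (p:ℂ)) - 1) = (((2:ℝ) ^ (1/p - 1) : ℝ) : ℂ) := by
    rw [Complex.ofReal_cpow (by norm_num : (0:ℝ) ≤ 2)]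
    push_cast
    ring_nf
  have hcpow2 : ((2:ℂ)) ^ (1 / (p:ℂ)) = (((2:ℝ) ^ (1/p) : ℝ) : ℂ) := by
    rw [Complex.ofReal_cpow (by norm_num : (0:ℝ) ≤ 2)]
    push_cast
    ring_nf
  rw [hcpow1, hcpow2]
  push_cast
  rw [show (-(τ:ℂ)) * ((((2:ℝ) ^ (1/p) : ℝ)) : ℂ)
      = -((((2:ℝ) ^ (1/p) : ℝ)) : ℂ) * (τ:ℂ) by ring]
  have hτ' : (τ:ℂ) ≠ 0 := Complex.ofReal_ne_zero.2 hτ0.ne'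
  field_simp
  ring
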